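/- (Weak Witt extension) Let v, w ∈ V be primitive vectors with h(v,v) = h(w,w). Then there exists g in the unitary group U of (V, h) with g(v) = w. -/

import Mathlib

open MulOpposite

/-- A `*`-hermitian form on a right `A`-module `V` (right modules are encoded as
modules over the opposite ring `Aᵐᵒᵖ`): it is additive and `A`-linear in the second
variable and satisfies `h v u = (h u v)*`. -/
structure HermitianForm (A V : Type*) [Ring A] [StarRing A] [AddCommGroup V]
    [Module Aᵐᵒᵖ V] where
  toFun : V → V → A
  add_right : ∀ u v w : V, toFun u (v + w) = toFun u v + toFun u w
  smul_right : ∀ (a : A) (u v : V), toFun u (op a • v) = toFun u v * a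
  conj_symm : ∀ u v : V, toFun v u = star (toFun u v)

namespace HermitianForm

variable {A V : Type*} [Ring A] [StarRing A] [AddCommGroup V] [Module Aᵐᵒᵖ V]

/-- Non-degeneracy: the map `u ↦ h u -` is a bijection of `V` onto the dual module. -/
def Nondeg (h : HermitianForm A V) : Prop :=
  ∀ φ : V →ₗ[Aᵐᵒᵖ] A, ∃! u : V, ∀ v : V, h.toFun u v = φ v

end HermitianForm

/-- A vector of the free module `V` of rank `m` is primitive if it belongs to a basis. -/
def IsPrimitive (A : Type*) {V : Type*} [Ring A] [AddCommGroup V] [Module Aᵐᵒᵖ V]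
    (m : ℕ) (v : V) : Prop :=
  ∃ (b : Module.Basis (Fin m) Aᵐᵒᵖ V) (i : Fin m), b i = v


section LocalRingAux
variable {A : Type*} [Ring A] [IsLocalRing A]

theorem my_isUnit_or {a b : A} (h : IsUnit (a + b)) : IsUnit a ∨ IsUnit b := by
  rcases h with ⟨u, hu⟩
  have h1 : a * ↑u⁻¹ + b * ↑u⁻¹ = 1 := by
    rw [← add_mul, ← hu, Units.mul_inv]
  rcases IsLocalRing.isUnit_or_isUnit_of_add_one h1 with h' | h'
  · left
    have : a = (a * ↑u⁻¹) * u := by rw [mul_assoc, Units.inv_mul, mul_one]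
    rw [this]; exact h'.mul u.isUnit
  · right
    have : b = (b * ↑u⁻¹) * u := by rw [mul_assoc, Units.inv_mul, mul_one]
    rw [this]; exact h'.mul u.isUnit

theorem nonunit_add_nonunit {a b : A} (ha : ¬ IsUnit a) (hb : ¬ IsUnit b) :
    ¬ IsUnit (a + b) := fun H => (my_isUnit_or H).elim ha hb

theorem nonunit_add_unit {a b : A} (ha : ¬ IsUnit a) (hb : IsUnit b) :
    IsUnit (a + b) := by
  by_contra H
  have : IsUnit (-a + (a + b)) := by rw [neg_add_cancel_left]; exact hb
  exact (my_isUnit_or this).elim (fun h => ha (by simpa using h.neg)) H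

theorem unit_add_nonunit {a b : A} (ha : IsUnit a) (hb : ¬ IsUnit b) :
    IsUnit (a + b) := by rw [add_comm]; exact nonunit_add_unit hb ha

theorem nonunit_neg {a : A} (ha : ¬ IsUnit a) : ¬ IsUnit (-a) :=
  fun H => ha (by simpa using H.neg)

end LocalRingAux

section UnitAux
variable {A : Type*} [Ring A]

theorem isUnit_of_unit_mul {ρ a : A} (hρ : IsUnit ρ) (h : IsUnit (ρ * a)) : IsUnit a := by
  obtain ⟨u, hu⟩ := hρ
  have : a = ↑u⁻¹ * (ρ * a) := by rw [← hu, ← mul_assoc, Units.inv_mul, one_mul]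
  rw [this]; exact (u⁻¹).isUnit.mul h

theorem isUnit_of_mul_unit {ρ a : A} (hρ : IsUnit ρ) (h : IsUnit (a * ρ)) : IsUnit a := by
  obtain ⟨u, hu⟩ := hρ
  have : a = (a * ρ) * ↑u⁻¹ := by rw [← hu, mul_assoc, Units.mul_inv, mul_one]
  rw [this]; exact h.mul (u⁻¹).isUnit

end UnitAux

namespace HermitianForm

variable {A V : Type*} [Ring A] [StarRing A] [AddCommGroup V] [Module Aᵐᵒᵖ V]

variable (h : HermitianForm A V)

theorem star_toFun (u v : V) : star (h.toFun u v) = h.toFun v u :=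
  (h.conj_symm u v).symm

theorem add_left (u v w : V) : h.toFun (u + v) w = h.toFun u w + h.toFun v w := by
  rw [h.conj_symm, h.add_right, star_add, ← h.conj_symm, ← h.conj_symm]

theorem smul_left (a : A) (u v : V) :
    h.toFun (op a • u) v = star a * h.toFun u v := by
  rw [h.conj_symm, h.smul_right, star_mul, ← h.conj_symm]

theorem zero_right (u : V) : h.toFun u 0 = 0 := by
  have := h.add_right u 0 0
  rw [add_zero] at this
  exact (left_eq_add.mp this).symm ▸ rfl

theorem zero_left (u : V) : h.toFun 0 u = 0 := by
  rw [h.conj_symm, zero_right, star_zero]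

theorem neg_right (u v : V) : h.toFun u (-v) = - h.toFun u v := by
  have := h.add_right u v (-v)
  rw [add_neg_cancel, h.zero_right] at this
  exact (neg_eq_of_add_eq_zero_right this.symm).symm

theorem neg_left (u v : V) : h.toFun (-u) v = - h.toFun u v := by
  rw [h.conj_symm, neg_right, star_neg, ← h.conj_symm]

theorem sub_right (u v w : V) : h.toFun u (v - w) = h.toFun u v - h.toFun u w := by
  rw [sub_eq_add_neg, h.add_right, h.neg_right, sub_eq_add_neg]

theorem sub_left (u v w : V) : h.toFun (u - v) w = h.toFun u w - h.toFun v w := by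
  rw [sub_eq_add_neg, h.add_left, h.neg_left, sub_eq_add_neg]

/-- The Eichler / quasi-reflection map along `u` with parameter `c`. -/
def eichler (u : V) (c : A) : V →ₗ[Aᵐᵒᵖ] V where
  toFun x := x - op (c * h.toFun u x) • u
  map_add' x y := by
    simp only [h.add_right, mul_add, op_add, add_smul]
    abel
  map_smul' r x := by
    have hx : h.toFun u (r • x) = h.toFun u x * unop r := by
      conv_lhs => rw [← op_unop r]
      rw [h.smul_right]
    simp only [RingHom.id_apply, smul_sub]
    rw [hx, ← mul_assoc, ← mul_smul]
    rfl

theorem eichler_apply (u : V) (c : A) (x : V) :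
    h.eichler u c x = x - op (c * h.toFun u x) • u := rfl

theorem toFun_eichler_right (u : V) (c : A) (y x : V) :
    h.toFun y (h.eichler u c x) = h.toFun y x - h.toFun y u * (c * h.toFun u x) := by
  rw [eichler_apply, h.sub_right, h.smul_right]

theorem toFun_eichler_left (u : V) (c : A) (x y : V) :
    h.toFun (h.eichler u c x) y = h.toFun x y - star (c * h.toFun u x) * h.toFun u y := by
  rw [eichler_apply, h.sub_left, h.smul_left]

theorem eichler_eichler (u : V) (c c' : A)
    (hk : c' + c - c * h.toFun u u * c' = 0) (x : V) :
    h.eichler u c (h.eichler u c' x) = x := by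
  rw [eichler_apply h u c, h.toFun_eichler_right, eichler_apply h u c']
  rw [sub_sub, ← add_smul, ← op_add]
  have key : c' * h.toFun u x + c * (h.toFun u x - h.toFun u u * (c' * h.toFun u x))
      = (c' + c - c * h.toFun u u * c') * h.toFun u x := by noncomm_ring
  rw [key, hk, zero_mul, op_zero, zero_smul, sub_zero]

theorem eichler_isometry (u : V) (c : A)
    (hc : c + star c - star c * h.toFun u u * c = 0) (x y : V) :
    h.toFun (h.eichler u c x) (h.eichler u c y) = h.toFun x y := by
  rw [h.toFun_eichler_right, h.toFun_eichler_left, h.toFun_eichler_left]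
  rw [← h.star_toFun u x, star_mul]
  have key : h.toFun x y - star (h.toFun u x) * star c * h.toFun u y -
        (star (h.toFun u x) - star (h.toFun u x) * star c * h.toFun u u) * (c * h.toFun u y)
      = h.toFun x y - star (h.toFun u x) *
          ((c + star c - star c * h.toFun u u * c) * h.toFun u y) := by noncomm_ring
  rw [key, hc, zero_mul, mul_zero, sub_zero]

theorem step (x y : V) (hxy : h.toFun x x = h.toFun y y)
    (hu : IsUnit (h.toFun x x - h.toFun y x)) :
    ∃ g : V ≃ₗ[Aᵐᵒᵖ] V, (∀ p q : V, h.toFun (g p) (g q) = h.toFun p q) ∧ g x = y := by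
  obtain ⟨dU, hdU⟩ := hu
  set d := h.toFun x x - h.toFun y x with hd
  set u := x - y with hu'
  set c : A := ↑dU⁻¹ with hc0
  have hdc : d * c = 1 := by rw [hc0, ← hdU, Units.mul_inv]
  have hcd : c * d = 1 := by rw [hc0, ← hdU, Units.inv_mul]
  have hstar_d : star d = h.toFun x x - h.toFun x y := by
    rw [hd, star_sub, h.star_toFun, h.star_toFun]
  have huu : h.toFun u u = d + star d := by
    rw [hu', h.sub_left, h.sub_right, h.sub_right, hstar_d, hd, ← hxy]; abel
  have h1 : star d * star c = 1 := by rw [← star_mul, hcd, star_one]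
  have h2 : star c * star d = 1 := by rw [← star_mul, hdc, star_one]
  have hc : c + star c - star c * h.toFun u u * c = 0 := by
    rw [huu]
    have e1 : star c * (d + star d) * c = star c + c := by
      rw [mul_add, add_mul, mul_assoc (star c) d c, hdc, mul_one, h2, one_mul]
    rw [e1]; abel
  have hk1 : star c + c - c * h.toFun u u * star c = 0 := by
    rw [huu]
    have e1 : c * (d + star d) * star c = star c + c := by
      rw [mul_add, add_mul, mul_assoc c (star d) (star c), h1, mul_one, hcd, one_mul]
    rw [e1]; abel
  have hux : h.toFun u x = d := by rw [hu', h.sub_left, hd]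
  refine ⟨LinearEquiv.ofLinear (h.eichler u c) (h.eichler u (star c))
      (LinearMap.ext fun t => h.eichler_eichler u c (star c) hk1 t)
      (LinearMap.ext fun t => h.eichler_eichler u (star c) c hc t), fun p q => ?_, ?_⟩
  · rw [LinearEquiv.ofLinear_apply, LinearEquiv.ofLinear_apply]
    exact h.eichler_isometry u c hc p q
  · rw [LinearEquiv.ofLinear_apply, h.eichler_apply, hux, hcd, op_one, one_smul, hu',
      sub_sub_cancel]


end HermitianForm

theorem exists_pairing {A V : Type*} [Ring A] [StarRing A] [AddCommGroup V]
    [Module Aᵐᵒᵖ V] (h : HermitianForm A V) (hnd : h.Nondeg) {m : ℕ} {v : V}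
    (hv : ∃ (b : Module.Basis (Fin m) Aᵐᵒᵖ V) (i : Fin m), b i = v) :
    ∃ z : V, h.toFun z v = 1 := by
  obtain ⟨b, i, rfl⟩ := hv
  let φ : V →ₗ[Aᵐᵒᵖ] A :=
    { toFun := fun x => unop (b.coord i x)
      map_add' := fun x y => by simp
      map_smul' := fun r x => by
        simp only [map_smul, RingHom.id_apply, MulOpposite.smul_eq_mul_unop]
        rfl }
  obtain ⟨z, hz, -⟩ := hnd φ
  refine ⟨z, ?_⟩
  rw [hz (b i)]
  simp [φ, Module.Basis.coord_apply, Module.Basis.repr_self]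


/-- Theorem 4.1 (weak Witt extension): primitive vectors of the same length are
conjugate under the unitary group of `(V, h)`. -/
theorem stmt_14 {A V : Type*} [Ring A] [StarRing A] [IsLocalRing A]
    [AddCommGroup V] [Module Aᵐᵒᵖ V]
    (hcent : ∀ a : A, star a = a → a ∈ Set.center A)
    (h2 : IsUnit (2 : A))
    (R : Type*) [CommRing R] [IsLocalRing R] [Algebra R A]
    (hinj : Function.Injective (algebraMap R A))
    (hfix : ∀ a : A, star a = a ↔ a ∈ Set.range (algebraMap R A))
    [Finite (IsLocalRing.ResidueField R)]
    (hodd : Odd (Nat.card (IsLocalRing.ResidueField R)))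
    (hsq : ∀ x ∈ IsLocalRing.maximalIdeal R,
      ∃ y ∈ IsLocalRing.maximalIdeal R, (1 + y) ^ 2 = 1 + x)
    (m : ℕ) (hm : 1 ≤ m) (b : Module.Basis (Fin m) Aᵐᵒᵖ V)
    (h : HermitianForm A V) (hnd : h.Nondeg)
    (v w : V) (hv : IsPrimitive A m v) (hw : IsPrimitive A m w)
    (hvw : h.toFun v v = h.toFun w w) :
    ∃ g : V ≃ₗ[Aᵐᵒᵖ] V,
      (∀ x y : V, h.toFun (g x) (g y) = h.toFun x y) ∧ g v = w := by
  classical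
  by_cases H1 : IsUnit (h.toFun v v - h.toFun w v)
  · exact h.step v w hvw H1
  by_cases H2 : IsUnit (h.toFun v v - h.toFun (-w) v)
  · obtain ⟨g, hg, hgv⟩ := h.step v (-w)
      (by rw [h.neg_left, h.neg_right, neg_neg, hvw]) H2
    refine ⟨g.trans (LinearEquiv.neg Aᵐᵒᵖ), fun p q => ?_, ?_⟩
    · simp only [LinearEquiv.trans_apply, LinearEquiv.neg_apply]
      rw [h.neg_left, h.neg_right, neg_neg, hg]
    · simp only [LinearEquiv.trans_apply, LinearEquiv.neg_apply, hgv, neg_neg]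
  -- Both `a - h w v` and `a + h w v` are nonunits.
  rw [h.neg_left, sub_neg_eq_add] at H2
  have hsum : ¬ IsUnit ((h.toFun v v - h.toFun w v) + (h.toFun v v + h.toFun w v)) :=
    nonunit_add_nonunit H1 H2
  have h2a : ¬ IsUnit (2 * h.toFun v v) := by
    have e : (h.toFun v v - h.toFun w v) + (h.toFun v v + h.toFun w v)
        = 2 * h.toFun v v := by rw [two_mul]; abel
    rwa [e] at hsum
  have na : ¬ IsUnit (h.toFun v v) := fun hA => h2a (h2.mul hA)
  have hdiff : ¬ IsUnit (-(h.toFun v v - h.toFun w v) + (h.toFun v v + h.toFun w v)) :=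
    nonunit_add_nonunit (nonunit_neg H1) H2
  have nwv : ¬ IsUnit (h.toFun w v) := by
    have e : -(h.toFun v v - h.toFun w v) + (h.toFun v v + h.toFun w v)
        = 2 * h.toFun w v := by rw [two_mul]; abel
    rw [e] at hdiff
    exact fun hA => hdiff (h2.mul hA)
  have nvw : ¬ IsUnit (h.toFun v w) := by
    intro hA
    have := isUnit_star.mpr hA
    rw [h.star_toFun] at this
    exact nwv this
  -- a dual vector pairing to 1 with both v and w
  obtain ⟨z₁, hz₁⟩ := exists_pairing h hnd hv
  obtain ⟨z₂, hz₂⟩ := exists_pairing h hnd hw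
  have hzex : ∃ z, IsUnit (h.toFun z v) ∧ IsUnit (h.toFun z w) := by
    by_cases k1 : IsUnit (h.toFun z₁ w)
    · exact ⟨z₁, by rw [hz₁]; exact isUnit_one, k1⟩
    by_cases k2 : IsUnit (h.toFun z₂ v)
    · exact ⟨z₂, k2, by rw [hz₂]; exact isUnit_one⟩
    · refine ⟨z₁ + z₂, ?_, ?_⟩
      · rw [h.add_left, hz₁]; exact unit_add_nonunit isUnit_one k2
      · rw [h.add_left, hz₂]; exact nonunit_add_unit k1 isUnit_one
  obtain ⟨z0, hz0v, hz0w⟩ := hzex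
  -- also make `h z z` a unit
  have hzex2 : ∃ z, IsUnit (h.toFun z v) ∧ IsUnit (h.toFun z w) ∧ IsUnit (h.toFun z z) := by
    by_cases ke : IsUnit (h.toFun z0 z0)
    · exact ⟨z0, hz0v, hz0w, ke⟩
    · obtain ⟨αU, hαU⟩ := id hz0v
      set ρ : A := ↑αU⁻¹ with hρdef
      have hρu : IsUnit ρ := (αU⁻¹).isUnit
      have hαρ : h.toFun z0 v * ρ = 1 := by rw [← hαU]; exact Units.mul_inv _
      have c1 : h.toFun z0 (op ρ • v) = 1 := by rw [h.smul_right, hαρ]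
      have c2 : h.toFun (op ρ • v) z0 = 1 := by
        rw [h.smul_left, ← h.star_toFun z0 v, ← star_mul, hαρ, star_one]
      have c3 : h.toFun (op ρ • v) (op ρ • v) = star ρ * (h.toFun v v * ρ) := by
        rw [h.smul_left, h.smul_right]
      have nX : ¬ IsUnit (star ρ * (h.toFun v v * ρ)) := fun hA =>
        na (isUnit_of_mul_unit hρu (isUnit_of_unit_mul (isUnit_star.mpr hρu) hA))
      refine ⟨z0 + op ρ • v, ?_, ?_, ?_⟩
      · rw [h.add_left, h.smul_left]
        refine unit_add_nonunit hz0v fun hA => na ?_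
        exact isUnit_of_unit_mul (isUnit_star.mpr hρu) hA
      · rw [h.add_left, h.smul_left]
        refine unit_add_nonunit hz0w fun hA => nvw ?_
        exact isUnit_of_unit_mul (isUnit_star.mpr hρu) hA
      · rw [h.add_left, h.add_right, h.add_right, c1, c2, c3]
        have e : (h.toFun z0 z0 + 1) + (1 + star ρ * (h.toFun v v * ρ))
            = h.toFun z0 z0 + (2 + star ρ * (h.toFun v v * ρ)) := by
          rw [← one_add_one_eq_two]; abel
        rw [e]
        exact nonunit_add_unit ke (unit_add_nonunit h2 nX)
  obtain ⟨z, hzv, hzw, hzz⟩ := hzex2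
  -- normalize so that `h Z v = 1`, keeping the other two values units
  have hZex : ∃ Z, h.toFun Z v = 1 ∧ IsUnit (h.toFun Z w) ∧ IsUnit (h.toFun Z Z) := by
    obtain ⟨αU, hα⟩ := id hzv
    refine ⟨op (star ((↑αU⁻¹ : A))) • z, ?_, ?_, ?_⟩
    · rw [h.smul_left, star_star, ← hα, Units.inv_mul]
    · rw [h.smul_left, star_star]
      exact (αU⁻¹).isUnit.mul hzw
    · rw [h.smul_left, h.smul_right, star_star]
      exact (αU⁻¹).isUnit.mul (hzz.mul (isUnit_star.mpr (αU⁻¹).isUnit))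
  obtain ⟨Z, hZv, hZw, hZZu⟩ := hZex
  have hvZ : h.toFun v Z = 1 := by rw [← h.star_toFun Z v, hZv, star_one]
  have hstar2 : star (2 : A) = 2 := by
    rw [show (2 : A) = 1 + 1 from one_add_one_eq_two.symm, star_add, star_one]
  -- a hermitian unit μ with μ + (μ + μ (E μ)) = 0 where E = h Z Z
  have hμex : ∃ μ : A, star μ = μ ∧ IsUnit μ ∧
      μ + (μ + μ * (h.toFun Z Z * μ)) = 0 := by
    obtain ⟨EU, hEU⟩ := id hZZu
    have hEstar : star (h.toFun Z Z) = h.toFun Z Z := h.star_toFun Z Z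
    have hEf : h.toFun Z Z * (↑EU⁻¹ : A) = 1 := by rw [← hEU]; exact Units.mul_inv _
    have hfE : (↑EU⁻¹ : A) * h.toFun Z Z = 1 := by rw [← hEU]; exact Units.inv_mul _
    have hfstar : star (↑EU⁻¹ : A) = (↑EU⁻¹ : A) := by
      have hs1 : h.toFun Z Z * star (↑EU⁻¹ : A) = 1 := by
        conv_lhs => rw [← hEstar]
        rw [← star_mul, hfE, star_one]
      calc star (↑EU⁻¹ : A) = ((↑EU⁻¹ : A) * h.toFun Z Z) * star (↑EU⁻¹ : A) := by
            rw [hfE, one_mul]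
        _ = (↑EU⁻¹ : A) * (h.toFun Z Z * star (↑EU⁻¹ : A)) := by rw [mul_assoc]
        _ = (↑EU⁻¹ : A) := by rw [hs1, mul_one]
    refine ⟨-(2 * (↑EU⁻¹ : A)), ?_, (h2.mul (EU⁻¹).isUnit).neg, ?_⟩
    · rw [star_neg, star_mul, hfstar, hstar2, mul_two, two_mul]
    · have e1 : (-(2 * (↑EU⁻¹ : A))) * (h.toFun Z Z * (-(2 * (↑EU⁻¹ : A))))
          = (2 * (↑EU⁻¹ : A)) * (h.toFun Z Z * (2 * (↑EU⁻¹ : A))) := by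
        rw [mul_neg, neg_mul_neg]
      have e2 : (2 * (↑EU⁻¹ : A)) * (h.toFun Z Z * (2 * (↑EU⁻¹ : A)))
          = 2 * (↑EU⁻¹ : A) + 2 * (↑EU⁻¹ : A) := by
        calc (2 * (↑EU⁻¹ : A)) * (h.toFun Z Z * (2 * (↑EU⁻¹ : A)))
            = 2 * (((↑EU⁻¹ : A) * h.toFun Z Z) * (2 * (↑EU⁻¹ : A))) := by
              rw [mul_assoc, mul_assoc]
          _ = 2 * (↑EU⁻¹ : A) + 2 * (↑EU⁻¹ : A) := by rw [hfE, one_mul, two_mul]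
      rw [e1, e2]
      abel
  obtain ⟨μ, hμstar, hμu, hμsum⟩ := hμex
  -- the intermediate vector `u = v + Z μ`
  have hu_u : h.toFun (v + op μ • Z) (v + op μ • Z) = h.toFun v v := by
    rw [h.add_left, h.add_right, h.add_right, h.smul_right, h.smul_left, h.smul_left,
      h.smul_right, hZv, hvZ, hμstar, one_mul, mul_one]
    rw [add_assoc, hμsum, add_zero]
  have hu_v : h.toFun (v + op μ • Z) v = h.toFun v v + μ := by
    rw [h.add_left, h.smul_left, hZv, mul_one, hμstar]
  have hu_w : h.toFun (v + op μ • Z) w = h.toFun v w + μ * h.toFun Z w := by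
    rw [h.add_left, h.smul_left, hμstar]
  obtain ⟨g1, hg1iso, hg1v⟩ := h.step v (v + op μ • Z) hu_u.symm (by
    rw [hu_v]
    have e : h.toFun v v - (h.toFun v v + μ) = -μ := by abel
    rw [e]; exact hμu.neg)
  obtain ⟨g2, hg2iso, hg2u⟩ := h.step (v + op μ • Z) w (hu_u.trans hvw) (by
    rw [hu_u]
    have hunit : IsUnit (h.toFun w (v + op μ • Z)) := by
      rw [← h.star_toFun (v + op μ • Z) w]
      exact isUnit_star.mpr (by rw [hu_w]; exact nonunit_add_unit nvw (hμu.mul hZw))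
    rw [sub_eq_add_neg]; exact nonunit_add_unit na hunit.neg)
  exact ⟨g1.trans g2, fun p q => by
      rw [LinearEquiv.trans_apply, LinearEquiv.trans_apply, hg2iso, hg1iso],
    by rw [LinearEquiv.trans_apply, hg1v, hg2u]⟩
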